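/- For each n let M̂_n and τ̂_n be real random variables on a probability space (Ω_n, P_n) with τ̂_n > 0 almost surely, let δ > 0 and Δ > 0 with δ ≤ Δ, let α ∈ (0,1), and let u_{1−α} be the (1−α)-quantile of the standard normal distribution. Assume that √n(M̂_n − δ²)/τ̂_n converges in distribution to a standard normal random variable. Then limsup_{n→∞} P_n( M̂_n ≥ Δ² + u_{1−α} τ̂_n/√n ) ≤ α; moreover, if δ = Δ, then lim_{n→∞} P_n( M̂_n ≥ Δ² + u_{1−α} τ̂_n/√n ) = α. -/

import Mathlib

open MeasureTheory ProbabilityTheory Filter Topology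

/-- level part of Theorem 3.2. If `√n(M̂_n - δ²)/τ̂_n` is asymptotically
standard normal and `0 < δ ≤ Δ`, then the rejection probability of the test
`M̂_n ≥ Δ² + u_{1-α} τ̂_n/√n` has limsup at most `α`; for `δ = Δ` it converges to `α`. -/
theorem relevant_test_asymptotic_level
    (Ω : ℕ → Type) (mΩ : ∀ n, MeasurableSpace (Ω n))
    (P : ∀ n, Measure (Ω n)) (hP : ∀ n, IsProbabilityMeasure (P n))
    (M τ' : ∀ n, Ω n → ℝ)
    (hτpos : ∀ n, ∀ᵐ ω ∂(P n), 0 < τ' n ω)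
    (δ Δ : ℝ) (hδ : 0 < δ) (hΔ : 0 < Δ) (hδΔ : δ ≤ Δ)
    (α : ℝ) (hα : α ∈ Set.Ioo (0:ℝ) 1)
    (u : ℝ) (hu : (gaussianReal 0 1) (Set.Iic u) = ENNReal.ofReal (1 - α))
    (hconv : ∀ f : BoundedContinuousFunction ℝ ℝ,
      Tendsto (fun (n : ℕ) =>
          ∫ ω, f (Real.sqrt n * (M n ω - δ ^ 2) / τ' n ω) ∂(P n)) atTop
        (𝓝 (∫ x, f x ∂(gaussianReal 0 1)))) :
    limsup (fun (n : ℕ) =>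
        (P n {ω | M n ω ≥ Δ ^ 2 + u * τ' n ω / Real.sqrt n}).toReal) atTop ≤ α
    ∧ (δ = Δ → Tendsto (fun (n : ℕ) =>
        (P n {ω | M n ω ≥ Δ ^ 2 + u * τ' n ω / Real.sqrt n}).toReal) atTop (𝓝 α)) := by
  classical
  set X : ∀ n, Ω n → ℝ := fun n ω => Real.sqrt n * (M n ω - δ ^ 2) / τ' n ω with hXdef
  -- the bounded continuous function x ↦ arctan x + 2
  let g : BoundedContinuousFunction ℝ ℝ :=
    BoundedContinuousFunction.mkOfBound ⟨fun x => Real.arctan x + 2, by continuity⟩ Real.pi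
      (by
        intro x y
        have h1 := Real.arctan_lt_pi_div_two x
        have h2 := Real.neg_pi_div_two_lt_arctan x
        have h3 := Real.arctan_lt_pi_div_two y
        have h4 := Real.neg_pi_div_two_lt_arctan y
        rw [Real.dist_eq, abs_le]
        constructor <;> simp only [ContinuousMap.coe_mk] <;> linarith)
  have hgval : ∀ x : ℝ, g x = Real.arctan x + 2 := fun x => rfl
  -- g's gaussian integral is positive
  have hgL : (2 - Real.pi / 2 : ℝ) ≤ ∫ x, g x ∂(gaussianReal 0 1) := by
    have hint : Integrable (fun x => g x) (gaussianReal 0 1) := g.integrable _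
    have hc : Integrable (fun _ : ℝ => (2 - Real.pi / 2 : ℝ)) (gaussianReal 0 1) :=
      integrable_const _
    have hmono : ∀ x : ℝ, (2 - Real.pi / 2 : ℝ) ≤ g x := by
      intro x
      have := Real.neg_pi_div_two_lt_arctan x
      rw [hgval]; linarith
    calc (2 - Real.pi / 2 : ℝ) = ∫ _ : ℝ, (2 - Real.pi / 2 : ℝ) ∂(gaussianReal 0 1) := by
          simp
      _ ≤ ∫ x, g x ∂(gaussianReal 0 1) := integral_mono hc hint hmono
  have hL0 : (0 : ℝ) < ∫ x, g x ∂(gaussianReal 0 1) := by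
    have : Real.pi < 4 := by linarith [Real.pi_lt_d2]
    linarith
  -- eventual a.e.-measurability of X n
  have hmeas : ∀ᶠ n in atTop, AEMeasurable (X n) (P n) := by
    have hpos : ∀ᶠ n in atTop, (0 : ℝ) < ∫ ω, g (X n ω) ∂(P n) :=
      (hconv g).eventually (eventually_gt_nhds hL0)
    filter_upwards [hpos] with n hn
    have hint : Integrable (fun ω => Real.arctan (X n ω) + 2) (P n) := by
      by_contra h
      rw [show (fun ω => g (X n ω)) = fun ω => Real.arctan (X n ω) + 2 from rfl,
        integral_undef h] at hn
      exact lt_irrefl _ hn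
    have harctan : AEMeasurable (fun ω => Real.arctan (X n ω)) (P n) := by
      have h2 := (hint.sub (integrable_const (2:ℝ))).aestronglyMeasurable.aemeasurable
      exact h2.congr (ae_of_all _ fun ω => by simp)
    have htan : Measurable Real.tan := by
      have : Real.tan = fun x => Real.sin x / Real.cos x := funext Real.tan_eq_sin_div_cos
      rw [this]
      exact Real.measurable_sin.div Real.measurable_cos
    have : AEMeasurable (fun ω => Real.tan (Real.arctan (X n ω))) (P n) :=
      htan.comp_aemeasurable harctan
    exact this.congr (ae_of_all _ fun ω => Real.tan_arctan _)
  -- pushforward probability measures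
  let ν : ℕ → ProbabilityMeasure ℝ := fun n =>
    if h : AEMeasurable (X n) (P n) then (⟨(P n).map (X n), Measure.isProbabilityMeasure_map h⟩ : ProbabilityMeasure ℝ)
    else (⟨gaussianReal 0 1, inferInstance⟩ : ProbabilityMeasure ℝ)
  let νlim : ProbabilityMeasure ℝ := ⟨gaussianReal 0 1, inferInstance⟩
  have hνtend : Tendsto ν atTop (𝓝 νlim) := by
    rw [ProbabilityMeasure.tendsto_iff_forall_integral_tendsto]
    intro f
    refine (hconv f).congr' ?_
    filter_upwards [hmeas] with n hn
    rw [show ν n = (⟨(P n).map (X n), Measure.isProbabilityMeasure_map hn⟩ : ProbabilityMeasure ℝ) from dif_pos hn]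
    exact (integral_map hn f.continuous.aestronglyMeasurable).symm
  -- gaussian gives no mass to points
  have hnull : ∀ x : ℝ, (gaussianReal 0 1) {x} = 0 := fun x =>
    gaussianReal_absolutelyContinuous 0 one_ne_zero (measure_singleton x)
  have hfront : (νlim : Measure ℝ) (frontier (Set.Ici u)) = 0 := by
    rw [frontier_Ici]
    exact hnull u
  have key : Tendsto (fun n => (ν n : Measure ℝ) (Set.Ici u)) atTop
      (𝓝 ((gaussianReal 0 1) (Set.Ici u))) :=
    ProbabilityMeasure.tendsto_measure_of_null_frontier_of_tendsto' hνtend hfront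
  -- the gaussian measure of [u, ∞) is α
  have hIci : (gaussianReal 0 1) (Set.Ici u) = ENNReal.ofReal α := by
    have hIio : (gaussianReal 0 1) (Set.Iio u) = ENNReal.ofReal (1 - α) := by
      refine le_antisymm ?_ ?_
      · rw [← hu]; exact measure_mono Set.Iio_subset_Iic_self
      · rw [← hu]
        calc (gaussianReal 0 1) (Set.Iic u)
            ≤ (gaussianReal 0 1) (Set.Iio u) + (gaussianReal 0 1) {u} := by
              refine le_trans (measure_mono ?_) (measure_union_le _ _)
              intro x hx
              rcases (show x ≤ u from hx).lt_or_eq with h | h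
              · exact Or.inl h
              · exact Or.inr h
          _ = (gaussianReal 0 1) (Set.Iio u) := by rw [hnull u, add_zero]
    have hcompl : Set.Ici u = (Set.Iio u)ᶜ := by simp
    rw [hcompl, measure_compl measurableSet_Iio (measure_ne_top _ _), hIio,
      measure_univ]
    rw [show (1 : ENNReal) = ENNReal.ofReal 1 by simp, ← ENNReal.ofReal_sub _ (by linarith [hα.2]),
      show (1 : ℝ) - (1 - α) = α by ring]
  have keyR : Tendsto (fun n => ((ν n : Measure ℝ) (Set.Ici u)).toReal) atTop (𝓝 α) := by
    have := (ENNReal.tendsto_toReal (by rw [hIci]; exact ENNReal.ofReal_ne_top)).comp key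
    rw [Function.comp_def] at this
    convert this using 2
    rw [hIci, ENNReal.toReal_ofReal hα.1.le]
  -- relating the rejection event to {X n ≥ u}
  set A : ∀ n, Set (Ω n) := fun n => {ω | M n ω ≥ Δ ^ 2 + u * τ' n ω / Real.sqrt n} with hAdef
  have hδ2 : δ ^ 2 ≤ Δ ^ 2 := by nlinarith
  have hsub : ∀ n : ℕ, 1 ≤ n → P n (A n) ≤ P n (X n ⁻¹' Set.Ici u) := by
    intro n hn
    refine measure_mono_ae ?_
    filter_upwards [hτpos n] with ω hτ hA
    have hs : (0 : ℝ) < Real.sqrt n := Real.sqrt_pos.mpr (by exact_mod_cast Nat.pos_of_ne_zero (by omega))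
    show u ≤ Real.sqrt n * (M n ω - δ ^ 2) / τ' n ω
    rw [le_div_iff₀ hτ]
    have hA' : Δ ^ 2 + u * τ' n ω / Real.sqrt n ≤ M n ω := hA
    have h2 : u * τ' n ω / Real.sqrt n ≤ M n ω - Δ ^ 2 := by linarith
    rw [div_le_iff₀ hs] at h2
    nlinarith [mul_nonneg hs.le (sub_nonneg.mpr hδ2)]
  have heq : δ = Δ → ∀ n : ℕ, 1 ≤ n → A n =ᵐ[P n] X n ⁻¹' Set.Ici u := by
    intro hδΔ' n hn
    rw [Filter.eventuallyEq_set]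
    filter_upwards [hτpos n] with ω hτ
    have hs : (0 : ℝ) < Real.sqrt n := Real.sqrt_pos.mpr (by exact_mod_cast Nat.pos_of_ne_zero (by omega))
    show (Δ ^ 2 + u * τ' n ω / Real.sqrt n ≤ M n ω) ↔
      u ≤ Real.sqrt n * (M n ω - δ ^ 2) / τ' n ω
    rw [le_div_iff₀ hτ, ← hδΔ']
    constructor
    · intro h
      have h2 : u * τ' n ω / Real.sqrt n ≤ M n ω - δ ^ 2 := by linarith
      rw [div_le_iff₀ hs] at h2
      nlinarith
    · intro h
      have h2 : u * τ' n ω ≤ (M n ω - δ ^ 2) * Real.sqrt n := by nlinarith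
      rw [← div_le_iff₀ hs] at h2
      linarith
  -- identify ν n (Ici u) with P n (X n ⁻¹' Ici u) eventually
  have hident : ∀ᶠ n in atTop, (ν n : Measure ℝ) (Set.Ici u) = P n (X n ⁻¹' Set.Ici u) := by
    filter_upwards [hmeas] with n hn
    rw [show ν n = (⟨(P n).map (X n), Measure.isProbabilityMeasure_map hn⟩ : ProbabilityMeasure ℝ) from dif_pos hn]
    exact Measure.map_apply_of_aemeasurable hn measurableSet_Ici
  have hfin : ∀ n, P n (A n) ≠ ⊤ := fun n => measure_ne_top _ _
  -- main bounds
  have hev_le : ∀ᶠ n in atTop, (P n (A n)).toReal ≤ ((ν n : Measure ℝ) (Set.Ici u)).toReal := by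
    filter_upwards [hident, eventually_ge_atTop 1] with n hid h1
    rw [hid]
    exact ENNReal.toReal_mono (measure_ne_top _ _) (hsub n h1)
  constructor
  · refine le_trans (limsup_le_limsup hev_le ?_ ?_) ?_
    · exact IsBoundedUnder.isCoboundedUnder_le
        ⟨0, Filter.eventually_map.mpr (Eventually.of_forall fun n => ENNReal.toReal_nonneg)⟩
    · exact keyR.isBoundedUnder_le
    · exact le_of_eq keyR.limsup_eq
  · intro hδΔ'
    refine keyR.congr' ?_
    filter_upwards [hident, eventually_ge_atTop 1] with n hid h1
    rw [hid, measure_congr (heq hδΔ' n h1)]
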